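/- Let f0, f1 be the automatic transformations of the Mealy automaton B_m, with products written so that (f g)(u) = f(g(u)). For m = 3: f1³ = f0 f1² and f1 f0 f1 = f0² f1. For every m ≥ 4 and all integers p₁, …, p_{m−3} ≥ 0, the following equalities of transformations hold: (∏_{i=1}^{m−4} (f1 f0^(p_i))) f1⁴ = (∏_{i=1}^{m−4} (f1 f0^(p_i))) f1 f0 f1², and (∏_{i=1}^{m−3} (f1 f0^(p_i))) f1 f0 f1 = (∏_{i=1}^{m−3} (f1 f0^(p_i))) f0² f1 (empty products denote the identity transformation). -/
import Mathlib


/-- The sequence of states visited by a Mealy automaton with transition function `tr`,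
started at state `q`, while reading the infinite word `u`. -/
def stateSeq {X Q : Type*} (tr : X → Q → Q) (q : Q) (u : ℕ → X) : ℕ → Q
  | 0 => q
  | k + 1 => tr (u k) (stateSeq tr q u k)

/-- The automatic transformation of infinite words defined by the Mealy automaton with
transition function `tr` and output function `out` at the state `q`. -/
def autTrans {X Q : Type*} (tr : X → Q → Q) (out : X → Q → X) (q : Q) (u : ℕ → X) : ℕ → X :=
  fun n => out (u n) (stateSeq tr q u n)

/-- The transformation given by a word of states: the product (composition, applied from
right to left) of the corresponding automatic transformations. -/
def wordTrans {X Q : Type*} (tr : X → Q → Q) (out : X → Q → X) (w : List Q) :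
    (ℕ → X) → (ℕ → X) :=
  (w.map (autTrans tr out)).foldr (· ∘ ·) id

/-- The growth function of a Mealy automaton: `growth tr out n` is the number of distinct
transformations of infinite words obtained as compositions of exactly `n` automatic
transformations of the automaton. -/
noncomputable def growth {X Q : Type*} (tr : X → Q → Q) (out : X → Q → X) (n : ℕ) : ℕ :=
  Set.ncard { g : (ℕ → X) → (ℕ → X) | ∃ w : List Q, w.length = n ∧ wordTrans tr out w = g }

/-- The `i`-th finite difference of a function `γ`. -/
def fdiff (γ : ℕ → ℤ) : ℕ → ℕ → ℤ
  | 0, n => γ n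
  | i + 1, n => fdiff γ i n - fdiff γ i (n - 1)

/-- Output function of the automaton `B_m`: at `q0` the output swaps `x0` and `x1` and fixes
every other letter; at `q1` the output sends `x_i` to `x_{i+1}` for `i ≤ m−2` and fixes
`x_{m−1}`. -/
def bmOut (m : ℕ) : Fin m → Fin 2 → Fin m := fun x q =>
  if q = 0 then
    if (x : ℕ) = 0 then ⟨1 % m, Nat.mod_lt 1 x.pos⟩
    else if (x : ℕ) = 1 then ⟨0, x.pos⟩
    else x
  else ⟨min (x.val + 1) (m - 1), by have := x.pos; omega⟩

/-- Transition function of the automaton `B_m`: from `q0` the transition goes to `q1` on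
reading `x2` and stays at `q0` otherwise; from `q1` it goes to `q0` on reading `x0` and
stays at `q1` otherwise. -/
def bmTr (m : ℕ) : Fin m → Fin 2 → Fin 2 := fun x q =>
  if q = 0 then (if (x : ℕ) = 2 then 1 else 0)
  else (if (x : ℕ) = 0 then 0 else 1)

/-- The automatic transformations `f0, f1` of the automaton `B_m` at states `q0, q1`. -/
def bmF (m : ℕ) (q : Fin 2) : (ℕ → Fin m) → (ℕ → Fin m) := autTrans (bmTr m) (bmOut m) q

/-- The product `∏_{i} (f1 f0^(p_i))` over a list of exponents, composed from right to left;
the empty product is the identity transformation. -/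
def leftProd {α : Type*} (f0 f1 : α → α) : List ℕ → (α → α)
  | [] => id
  | p :: ps => f1 ∘ f0^[p] ∘ leftProd f0 f1 ps

namespace RelBM

def listOut (m : ℕ) (x : Fin m) (w : List (Fin 2)) : Fin m :=
  w.foldr (fun q y => bmOut m y q) x

def listTr (m : ℕ) (x : Fin m) : List (Fin 2) → List (Fin 2)
  | [] => []
  | q :: w => bmTr m (listOut m x w) q :: listTr m x w

def compW (m : ℕ) (w : List (Fin 2)) : (ℕ → Fin m) → (ℕ → Fin m) :=
  (w.map (bmF m)).foldr (· ∘ ·) id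

def listSt (m : ℕ) (w : List (Fin 2)) (u : ℕ → Fin m) : ℕ → List (Fin 2)
  | 0 => w
  | n + 1 => listTr m (u n) (listSt m w u n)

variable {m : ℕ}

@[simp] lemma listOut_nil (x : Fin m) : listOut m x [] = x := rfl

@[simp] lemma listOut_cons (x : Fin m) (q w) :
    listOut m x (q :: w) = bmOut m (listOut m x w) q := rfl

lemma listOut_append (x : Fin m) (w₁ w₂) :
    listOut m x (w₁ ++ w₂) = listOut m (listOut m x w₂) w₁ := by
  simp [listOut, List.foldr_append]

@[simp] lemma listTr_nil (x : Fin m) : listTr m x [] = [] := rfl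

@[simp] lemma listTr_cons (x : Fin m) (q w) :
    listTr m x (q :: w) = bmTr m (listOut m x w) q :: listTr m x w := rfl

lemma listTr_append (x : Fin m) (w₁ w₂) :
    listTr m x (w₁ ++ w₂) = listTr m (listOut m x w₂) w₁ ++ listTr m x w₂ := by
  induction w₁ with
  | nil => simp
  | cons q w ih => simp [listOut_append, ih]

lemma compW_cons (q : Fin 2) (w) : compW m (q :: w) = bmF m q ∘ compW m w := rfl

lemma compW_nil : compW m [] = id := rfl

lemma compW_append (w₁ w₂ : List (Fin 2)) :
    compW m (w₁ ++ w₂) = compW m w₁ ∘ compW m w₂ := by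
  induction w₁ with
  | nil => rfl
  | cons q w ih => simp [compW_cons, ih]; rfl

lemma compW_key : ∀ (w : List (Fin 2)) (u : ℕ → Fin m) (n : ℕ),
    compW m w u n = listOut m (u n) (listSt m w u n) := by
  intro w
  induction w with
  | nil =>
    intro u n
    have h : listSt m [] u n = [] := by
      induction n with
      | zero => rfl
      | succ n ih => simp [listSt, ih]
    simp [compW_nil, h]
  | cons q w ih =>
    intro u n
    have hst : ∀ k, listSt m (q :: w) u k
        = stateSeq (bmTr m) q (compW m w u) k :: listSt m w u k := by
      intro k
      induction k with
      | zero => rfl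
      | succ k ihk =>
        show listTr m (u k) (listSt m (q :: w) u k) = _
        rw [ihk, listTr_cons, ← ih u k]
        rfl
    rw [compW_cons]
    show bmF m q (compW m w u) n = _
    rw [hst n, listOut_cons, ← ih u n]
    rfl

lemma bisim {R : List (Fin 2) → List (Fin 2) → Prop}
    (hR : ∀ s t, R s t → ∀ x : Fin m,
      listOut m x s = listOut m x t ∧ R (listTr m x s) (listTr m x t))
    {s t : List (Fin 2)} (h : R s t) : compW m s = compW m t := by
  funext u n
  have inv : ∀ k, R (listSt m s u k) (listSt m t u k) := by
    intro k
    induction k with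
    | zero => exact h
    | succ k ihk => exact (hR _ _ ihk (u k)).2
  rw [compW_key, compW_key, (hR _ _ (inv n) (u n)).1]

end RelBM

namespace RelBM

variable {m : ℕ}

lemma bmOut1_val (x : Fin m) : (bmOut m x 1).val = min (x.val + 1) (m - 1) := by
  simp [bmOut]

lemma bmOut0_val0 (x : Fin m) (h : x.val = 0) : (bmOut m x 0).val = 1 % m := by
  simp [bmOut, h]

lemma bmOut0_val1 (x : Fin m) (h : x.val = 1) : (bmOut m x 0).val = 0 := by
  simp [bmOut, h]

lemma bmOut0_big (x : Fin m) (h : 2 ≤ x.val) : bmOut m x 0 = x := by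
  simp only [bmOut, if_true, eq_self_iff_true]
  rw [if_neg (by omega), if_neg (by omega)]

lemma bmTr0 (x : Fin m) : bmTr m x 0 = if x.val = 2 then 1 else 0 := by
  simp [bmTr]

lemma bmTr1 (x : Fin m) : bmTr m x 1 = if x.val = 0 then 0 else 1 := by
  simp [bmTr]

lemma run0_big (x : Fin m) (h : 3 ≤ x.val) (p : ℕ) :
    listOut m x (List.replicate p 0) = x ∧
    listTr m x (List.replicate p 0) = List.replicate p 0 := by
  induction p with
  | zero => exact ⟨rfl, rfl⟩
  | succ p ih =>
    rw [List.replicate_succ]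
    refine ⟨?_, ?_⟩
    · rw [listOut_cons, ih.1, bmOut0_big x (by omega)]
    · rw [listTr_cons, ih.1, ih.2, bmTr0, if_neg (by omega)]

lemma run0_two (x : Fin m) (h : x.val = 2) (p : ℕ) :
    listOut m x (List.replicate p 0) = x ∧
    listTr m x (List.replicate p 0) = List.replicate p 1 := by
  induction p with
  | zero => exact ⟨rfl, rfl⟩
  | succ p ih =>
    rw [List.replicate_succ, List.replicate_succ]
    refine ⟨?_, ?_⟩
    · rw [listOut_cons, ih.1, bmOut0_big x (by omega)]
    · rw [listTr_cons, ih.1, ih.2, bmTr0, if_pos h]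

lemma run1 (x : Fin m) (h : 1 ≤ x.val) (p : ℕ) :
    (listOut m x (List.replicate p 1)).val = min (x.val + p) (m - 1) ∧
    listTr m x (List.replicate p 1) = List.replicate p 1 := by
  have hx := x.isLt
  induction p with
  | zero => exact ⟨by simp; omega, rfl⟩
  | succ p ih =>
    rw [List.replicate_succ]
    refine ⟨?_, ?_⟩
    · rw [listOut_cons, bmOut1_val, ih.1]; omega
    · rw [listTr_cons, ih.2, bmTr1, if_neg (by rw [ih.1]; omega)]

def wordOf : List ℕ → List (Fin 2)
  | [] => []
  | p :: ps => 1 :: (List.replicate p 0 ++ wordOf ps)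

lemma wordOf_concat (qs : List ℕ) (p : ℕ) :
    wordOf (qs ++ [p]) = wordOf qs ++ (1 :: List.replicate p 0) := by
  induction qs with
  | nil => simp [wordOf]
  | cons q qs ih => simp [wordOf, ih]

lemma prefixP (x : Fin m) (h : 3 ≤ x.val) : ∀ qs : List ℕ,
    (listOut m x (wordOf qs)).val = min (x.val + qs.length) (m - 1) ∧
    listTr m x (wordOf qs) = wordOf qs := by
  have hx := x.isLt
  intro qs
  induction qs with
  | nil => simp [wordOf]; omega
  | cons p qs ih =>
    have h3 : 3 ≤ (listOut m x (wordOf qs)).val := by rw [ih.1]; omega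
    have hrun := run0_big (listOut m x (wordOf qs)) h3 p
    refine ⟨?_, ?_⟩
    · show (bmOut m (listOut m x (List.replicate p 0 ++ wordOf qs)) 1).val = _
      rw [listOut_append, hrun.1, bmOut1_val, ih.1]
      simp [List.length_cons]; omega
    · show bmTr m (listOut m x (List.replicate p 0 ++ wordOf qs)) 1
          :: listTr m x (List.replicate p 0 ++ wordOf qs) = _
      rw [listOut_append, listTr_append, hrun.1, hrun.2, ih.2,
        bmTr1, if_neg (by omega)]
      rfl

end RelBM

namespace RelBM

variable {m : ℕ}

lemma tr1_one (x : Fin m) (h : x.val ≠ 0) : bmTr m x 1 = 1 := by rw [bmTr1, if_neg h]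
lemma tr1_zero (x : Fin m) (h : x.val = 0) : bmTr m x 1 = 0 := by rw [bmTr1, if_pos h]
lemma tr0_one (x : Fin m) (h : x.val = 2) : bmTr m x 0 = 1 := by rw [bmTr0, if_pos h]
lemma tr0_zero (x : Fin m) (h : x.val ≠ 2) : bmTr m x 0 = 0 := by rw [bmTr0, if_neg h]

lemma outB (hm : 3 ≤ m) {ps : List ℕ} (hlen : ps.length = m - 3)
    {y : Fin m} (hy : 3 ≤ y.val) :
    (listOut m y (wordOf ps)).val = m - 1 ∧ listTr m y (wordOf ps) = wordOf ps := by
  have h := prefixP y hy ps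
  have := y.isLt
  exact ⟨by rw [h.1, hlen]; omega, h.2⟩

lemma out2_block (hm4 : 4 ≤ m) {qs : List ℕ} {p : ℕ} (hq : qs.length = m - 4)
    {z : Fin m} (hz : z.val = 2) :
    (listOut m z (wordOf qs ++ (1 :: List.replicate p 0))).val = m - 1 ∧
    listTr m z (wordOf qs ++ (1 :: List.replicate p 0))
      = wordOf qs ++ (1 :: List.replicate p 1) := by
  have hrun := run0_two z hz p
  have hb : (listOut m z ((1 : Fin 2) :: List.replicate p 0)).val = 3 := by
    rw [listOut_cons, hrun.1, bmOut1_val]; omega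
  have hb3 : 3 ≤ (listOut m z ((1 : Fin 2) :: List.replicate p 0)).val := by rw [hb]
  have hP := prefixP _ hb3 qs
  constructor
  · rw [listOut_append, hP.1, hb, hq]; omega
  · rw [listTr_append, hP.2, listTr_cons, hrun.1, hrun.2, bmTr1, if_neg (by omega)]

lemma out_block1 (hm4 : 4 ≤ m) {qs : List ℕ} {p : ℕ} (hq : qs.length = m - 4)
    {z : Fin m} (hz : 2 ≤ z.val) :
    (listOut m z (wordOf qs ++ (1 :: List.replicate p 1))).val = m - 1 ∧
    listTr m z (wordOf qs ++ (1 :: List.replicate p 1))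
      = wordOf qs ++ (1 :: List.replicate p 1) := by
  have hzlt := z.isLt
  have hrun := run1 z (by omega) p
  have hb : 3 ≤ (listOut m z ((1 : Fin 2) :: List.replicate p 1)).val := by
    rw [listOut_cons, bmOut1_val, hrun.1]; omega
  have hP := prefixP _ hb qs
  have hblt := (listOut m z ((1 : Fin 2) :: List.replicate p 1)).isLt
  constructor
  · rw [listOut_append, hP.1, hq]; omega
  · rw [listTr_append, hP.2, listTr_cons, hrun.2, bmTr1, if_neg (by rw [hrun.1]; omega)]

def Rel (m : ℕ) (ps : List ℕ) (s t : List (Fin 2)) : Prop :=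
  s = t
  ∨ (s = wordOf ps ++ [1, 0, 1] ∧ t = wordOf ps ++ [0, 0, 1])
  ∨ (s = wordOf ps ++ [1, 1, 1] ∧ t = wordOf ps ++ [0, 1, 1])
  ∨ (∃ qs p c, ps = qs ++ [p] ∧
      s = (wordOf qs ++ (1 :: List.replicate p 0)) ++ [1, 1, c] ∧
      t = (wordOf qs ++ (1 :: List.replicate p 1)) ++ [1, 1, c])

lemma Rel_closed (hm : 3 ≤ m) {ps : List ℕ} (hlen : ps.length = m - 3) :
    ∀ s t, Rel m ps s t → ∀ x : Fin m,
      listOut m x s = listOut m x t ∧ Rel m ps (listTr m x s) (listTr m x t) := by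
  rintro s t (rfl | ⟨rfl, rfl⟩ | ⟨rfl, rfl⟩ | ⟨qs, p, c, hps, rfl, rfl⟩) x
  · exact ⟨rfl, Or.inl rfl⟩
  · -- family 2A : tails [1,0,1] vs [0,0,1]
    have hxlt := x.isLt
    set a1 := bmOut m x 1 with ha1def
    set a2 := bmOut m a1 0 with ha2def
    have ha1 : a1.val = min (x.val + 1) (m - 1) := bmOut1_val x
    have hsO : listOut m x (wordOf ps ++ [1, 0, 1])
        = listOut m (bmOut m a2 1) (wordOf ps) := by rw [listOut_append]; rfl
    have htO : listOut m x (wordOf ps ++ [0, 0, 1])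
        = listOut m (bmOut m a2 0) (wordOf ps) := by rw [listOut_append]; rfl
    have hsT : listTr m x (wordOf ps ++ [1, 0, 1])
        = listTr m (bmOut m a2 1) (wordOf ps) ++ [bmTr m a2 1, bmTr m a1 0, bmTr m x 1] := by
      rw [listTr_append]; rfl
    have htT : listTr m x (wordOf ps ++ [0, 0, 1])
        = listTr m (bmOut m a2 0) (wordOf ps) ++ [bmTr m a2 0, bmTr m a1 0, bmTr m x 1] := by
      rw [listTr_append]; rfl
    rcases (show x.val = 0 ∨ a1.val = 2 ∨ 3 ≤ a1.val by omega) with hx0 | h12 | h13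
    · -- x = 0 : sync
      have ha1v : a1.val = 1 := by omega
      have ha2v : a2.val = 0 := bmOut0_val1 a1 ha1v
      have hout : bmOut m a2 1 = bmOut m a2 0 := by
        refine Fin.ext ?_
        rw [bmOut1_val, bmOut0_val0 a2 ha2v, ha2v, Nat.mod_eq_of_lt (by omega)]
        omega
      refine ⟨by rw [hsO, htO, hout], Or.inl ?_⟩
      rw [hsT, htT, hout, tr1_zero a2 ha2v, tr0_zero a2 (by omega)]
    · -- a1 = 2 : the divergence event
      have ha2e : a2 = a1 := bmOut0_big a1 (by omega)
      have ha2v : a2.val = 2 := by rw [ha2e, h12]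
      rcases ps.eq_nil_or_concat with hnil | ⟨qs, p, hps⟩
      · -- m = 3
        have hm3 : m = 3 := by rw [hnil] at hlen; simp at hlen; omega
        subst hnil
        have hout : bmOut m a2 1 = bmOut m a2 0 := by
          refine Fin.ext ?_
          rw [bmOut1_val, bmOut0_big a2 (by omega)]
          omega
        refine ⟨by rw [hsO, htO, hout], Or.inl ?_⟩
        rw [hsT, htT, hout, tr1_one a2 (by omega), tr0_one a2 ha2v]
      · -- ps = qs ++ [p], m ≥ 4
        rw [List.concat_eq_append] at hps
        subst hps
        have hq : qs.length = m - 4 := by simp at hlen; omega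
        have hm4 : 4 ≤ m := by simp at hlen; omega
        have hx1 : x.val = 1 := by omega
        have hyv : (bmOut m a2 1).val = 3 := by rw [bmOut1_val, ha2v]; omega
        have hs' := outB hm hlen (y := bmOut m a2 1) (by omega)
        have ht' := out2_block hm4 hq ha2v (p := p)
        have he : bmOut m a2 0 = a2 := bmOut0_big a2 (by omega)
        rw [wordOf_concat] at hsO htO hsT htT hs'
        rw [he] at htO htT
        constructor
        · rw [wordOf_concat, hsO, htO]
          exact Fin.ext (by rw [hs'.1, ht'.1])
        · rw [wordOf_concat, hsT, htT, hs'.2, ht'.2]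
          rw [tr1_one a2 (by omega), tr0_one a2 ha2v, tr0_one a1 h12, tr1_one x (by omega)]
          exact Or.inr (Or.inr (Or.inr ⟨qs, p, 1, rfl, rfl, rfl⟩))
    · -- a1 ≥ 3 : stay in family 2A
      have ha2e : a2 = a1 := bmOut0_big a1 (by omega)
      have hyv : (bmOut m a2 1).val = min (a1.val + 1) (m - 1) := by
        rw [bmOut1_val, ha2e]
      have ha1lt := a1.isLt
      have hs' := outB hm hlen (y := bmOut m a2 1) (by omega)
      have ht' := outB hm hlen (y := bmOut m a2 0) (by rw [bmOut0_big a2 (by omega), ha2e]; omega)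
      constructor
      · rw [hsO, htO]
        exact Fin.ext (by rw [hs'.1, ht'.1])
      · rw [hsT, htT, hs'.2, ht'.2]
        rw [tr1_one a2 (by rw [ha2e]; omega), tr0_zero a2 (by rw [ha2e]; omega),
          tr0_zero a1 (by omega), tr1_one x (by omega)]
        exact Or.inr (Or.inl ⟨rfl, rfl⟩)
  · -- family 2B : tails [1,1,1] vs [0,1,1]
    have hxlt := x.isLt
    set a1 := bmOut m x 1 with ha1def
    set a2 := bmOut m a1 1 with ha2def
    have ha1 : a1.val = min (x.val + 1) (m - 1) := bmOut1_val x
    have ha2 : a2.val = min (a1.val + 1) (m - 1) := bmOut1_val a1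
    have hsO : listOut m x (wordOf ps ++ [1, 1, 1])
        = listOut m (bmOut m a2 1) (wordOf ps) := by rw [listOut_append]; rfl
    have htO : listOut m x (wordOf ps ++ [0, 1, 1])
        = listOut m (bmOut m a2 0) (wordOf ps) := by rw [listOut_append]; rfl
    have hsT : listTr m x (wordOf ps ++ [1, 1, 1])
        = listTr m (bmOut m a2 1) (wordOf ps) ++ [bmTr m a2 1, bmTr m a1 1, bmTr m x 1] := by
      rw [listTr_append]; rfl
    have htT : listTr m x (wordOf ps ++ [0, 1, 1])
        = listTr m (bmOut m a2 0) (wordOf ps) ++ [bmTr m a2 0, bmTr m a1 1, bmTr m x 1] := by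
      rw [listTr_append]; rfl
    rcases (show a2.val = 2 ∨ 3 ≤ a2.val by omega) with h22 | h23
    · rcases ps.eq_nil_or_concat with hnil | ⟨qs, p, hps⟩
      · have hm3 : m = 3 := by rw [hnil] at hlen; simp at hlen; omega
        subst hnil
        have hout : bmOut m a2 1 = bmOut m a2 0 := by
          refine Fin.ext ?_
          rw [bmOut1_val, bmOut0_big a2 (by omega)]
          omega
        refine ⟨by rw [hsO, htO, hout], Or.inl ?_⟩
        rw [hsT, htT, hout, tr1_one a2 (by omega), tr0_one a2 h22]
      · rw [List.concat_eq_append] at hps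
        subst hps
        have hq : qs.length = m - 4 := by simp at hlen; omega
        have hm4 : 4 ≤ m := by simp at hlen; omega
        have hx0 : x.val = 0 := by omega
        have hs' := outB hm hlen (y := bmOut m a2 1) (by rw [bmOut1_val]; omega)
        have ht' := out2_block hm4 hq h22 (p := p)
        have he : bmOut m a2 0 = a2 := bmOut0_big a2 (by omega)
        rw [wordOf_concat] at hsO htO hsT htT hs'
        rw [he] at htO htT
        constructor
        · rw [wordOf_concat, hsO, htO]
          exact Fin.ext (by rw [hs'.1, ht'.1])
        · rw [wordOf_concat, hsT, htT, hs'.2, ht'.2]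
          rw [tr1_one a2 (by omega), tr0_one a2 h22, tr1_one a1 (by omega), tr1_zero x hx0]
          exact Or.inr (Or.inr (Or.inr ⟨qs, p, 0, rfl, rfl, rfl⟩))
    · -- a2 ≥ 3 : stay in family 2B
      have hs' := outB hm hlen (y := bmOut m a2 1) (by rw [bmOut1_val]; omega)
      have ht' := outB hm hlen (y := bmOut m a2 0) (by rw [bmOut0_big a2 (by omega)]; omega)
      constructor
      · rw [hsO, htO]
        exact Fin.ext (by rw [hs'.1, ht'.1])
      · rw [hsT, htT, hs'.2, ht'.2]
        rw [tr1_one a2 (by omega), tr0_zero a2 (by omega), tr1_one a1 (by omega),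
          tr1_one x (by omega)]
        exact Or.inr (Or.inr (Or.inl ⟨rfl, rfl⟩))
  · -- family 3
    have hxlt := x.isLt
    have hlen' : (qs ++ [p]).length = m - 3 := by rw [← hps]; exact hlen
    have hq : qs.length = m - 4 := by simp at hlen'; omega
    have hm4 : 4 ≤ m := by simp at hlen'; omega
    set b1 := bmOut m x c with hb1def
    set b2 := bmOut m b1 1 with hb2def
    set b3 := bmOut m b2 1 with hb3def
    have hb2 : b2.val = min (b1.val + 1) (m - 1) := bmOut1_val b1
    have hb3 : b3.val = min (b2.val + 1) (m - 1) := bmOut1_val b2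
    have hb1lt := b1.isLt
    have hsO : listOut m x ((wordOf qs ++ (1 :: List.replicate p 0)) ++ [1, 1, c])
        = listOut m b3 (wordOf qs ++ (1 :: List.replicate p 0)) := by rw [listOut_append]; rfl
    have htO : listOut m x ((wordOf qs ++ (1 :: List.replicate p 1)) ++ [1, 1, c])
        = listOut m b3 (wordOf qs ++ (1 :: List.replicate p 1)) := by rw [listOut_append]; rfl
    have hsT : listTr m x ((wordOf qs ++ (1 :: List.replicate p 0)) ++ [1, 1, c])
        = listTr m b3 (wordOf qs ++ (1 :: List.replicate p 0))
          ++ [bmTr m b2 1, bmTr m b1 1, bmTr m x c] := by rw [listTr_append]; rfl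
    have htT : listTr m x ((wordOf qs ++ (1 :: List.replicate p 1)) ++ [1, 1, c])
        = listTr m b3 (wordOf qs ++ (1 :: List.replicate p 1))
          ++ [bmTr m b2 1, bmTr m b1 1, bmTr m x c] := by rw [listTr_append]; rfl
    rcases Nat.eq_zero_or_pos b1.val with h10 | h11
    · -- b1 = 0 : full synchronisation
      have h32 : b3.val = 2 := by omega
      have hs' := out2_block hm4 hq h32 (p := p)
      have ht' := out_block1 hm4 hq (p := p) (z := b3) (by omega)
      refine ⟨?_, Or.inl ?_⟩
      · rw [hsO, htO]
        exact Fin.ext (by rw [hs'.1, ht'.1])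
      · rw [hsT, htT, hs'.2, ht'.2]
    · -- b1 ≥ 1 : stay in family 3
      have h33 : 3 ≤ b3.val := by omega
      have hs' := outB hm hlen' (y := b3) h33
      rw [wordOf_concat] at hs'
      have ht' := out_block1 hm4 hq (p := p) (z := b3) (by omega)
      constructor
      · rw [hsO, htO]
        exact Fin.ext (by rw [hs'.1, ht'.1])
      · rw [hsT, htT, hs'.2, ht'.2]
        rw [tr1_one b2 (by omega), tr1_one b1 (by omega)]
        exact Or.inr (Or.inr (Or.inr ⟨qs, p, bmTr m x c, hps, rfl, rfl⟩))

end RelBM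

namespace RelBM

variable {m : ℕ}

lemma lemA (hm : 3 ≤ m) {ps : List ℕ} (hlen : ps.length = m - 3) :
    compW m (wordOf ps ++ [1, 0, 1]) = compW m (wordOf ps ++ [0, 0, 1]) :=
  bisim (Rel_closed hm hlen) (Or.inr (Or.inl ⟨rfl, rfl⟩))

lemma lemB (hm : 3 ≤ m) {ps : List ℕ} (hlen : ps.length = m - 3) :
    compW m (wordOf ps ++ [1, 1, 1]) = compW m (wordOf ps ++ [0, 1, 1]) :=
  bisim (Rel_closed hm hlen) (Or.inr (Or.inr (Or.inl ⟨rfl, rfl⟩)))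

lemma iter0 (p : ℕ) : (bmF m 0)^[p] = compW m (List.replicate p 0) := by
  induction p with
  | zero => rfl
  | succ p ih => rw [Function.iterate_succ', List.replicate_succ, compW_cons, ih]

lemma iter1 (k : ℕ) : (bmF m 1)^[k] = compW m (List.replicate k 1) := by
  induction k with
  | zero => rfl
  | succ k ih => rw [Function.iterate_succ', List.replicate_succ, compW_cons, ih]

lemma leftProd_eq (ps : List ℕ) :
    leftProd (bmF m 0) (bmF m 1) ps = compW m (wordOf ps) := by
  induction ps with
  | nil => rfl
  | cons p ps ih =>
    show bmF m 1 ∘ (bmF m 0)^[p] ∘ leftProd (bmF m 0) (bmF m 1) ps = _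
    rw [ih, iter0, wordOf]
    rw [compW_cons, compW_append]

end RelBM

/-- The defining relations of the semigroups `S_{B_m}` hold among the automatic
transformations `f0, f1` of `B_m`: for `m = 3`, `f1³ = f0 f1²` and `f1 f0 f1 = f0² f1`;
for every `m ≥ 4` and all exponents `p_i ≥ 0`,
`(∏_{i=1}^{m−4} (f1 f0^(p_i))) f1⁴ = (∏_{i=1}^{m−4} (f1 f0^(p_i))) f1 f0 f1²` and
`(∏_{i=1}^{m−3} (f1 f0^(p_i))) f1 f0 f1 = (∏_{i=1}^{m−3} (f1 f0^(p_i))) f0² f1`. -/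
theorem relations_bm :
    (bmF 3 1 ∘ bmF 3 1 ∘ bmF 3 1 = bmF 3 0 ∘ bmF 3 1 ∘ bmF 3 1 ∧
     bmF 3 1 ∘ bmF 3 0 ∘ bmF 3 1 = bmF 3 0 ∘ bmF 3 0 ∘ bmF 3 1) ∧
    ∀ m : ℕ, 4 ≤ m →
      (∀ ps : List ℕ, ps.length = m - 4 →
        leftProd (bmF m 0) (bmF m 1) ps ∘ (bmF m 1)^[4] =
          leftProd (bmF m 0) (bmF m 1) ps ∘ bmF m 1 ∘ bmF m 0 ∘ (bmF m 1)^[2]) ∧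
      (∀ ps : List ℕ, ps.length = m - 3 →
        leftProd (bmF m 0) (bmF m 1) ps ∘ bmF m 1 ∘ bmF m 0 ∘ bmF m 1 =
          leftProd (bmF m 0) (bmF m 1) ps ∘ bmF m 0 ∘ bmF m 0 ∘ bmF m 1) := by
  refine ⟨⟨?_, ?_⟩, fun m hm => ⟨fun ps hps => ?_, fun ps hps => ?_⟩⟩
  · exact RelBM.lemB (m := 3) le_rfl (ps := []) rfl
  · exact RelBM.lemA (m := 3) le_rfl (ps := []) rfl
  · have h := RelBM.lemB (m := m) (by omega) (ps := ps ++ [0])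
      (by simp [hps]; omega)
    rw [RelBM.wordOf_concat] at h
    have e1 : RelBM.wordOf ps ++ ((1 : Fin 2) :: List.replicate 0 0) ++ [1, 1, 1]
        = RelBM.wordOf ps ++ [1, 1, 1, 1] := by simp
    have e2 : RelBM.wordOf ps ++ ((1 : Fin 2) :: List.replicate 0 0) ++ [0, 1, 1]
        = RelBM.wordOf ps ++ [1, 0, 1, 1] := by simp
    rw [e1, e2] at h
    rw [RelBM.compW_append, RelBM.compW_append] at h
    rw [RelBM.leftProd_eq, RelBM.iter1]
    calc RelBM.compW m (RelBM.wordOf ps) ∘ RelBM.compW m [1, 1, 1, 1]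
        = RelBM.compW m (RelBM.wordOf ps) ∘ RelBM.compW m [1, 0, 1, 1] := h
      _ = _ := rfl
  · have h := RelBM.lemA (m := m) (by omega) (ps := ps) (by omega)
    rw [RelBM.compW_append, RelBM.compW_append] at h
    rw [RelBM.leftProd_eq]
    calc RelBM.compW m (RelBM.wordOf ps) ∘ RelBM.compW m [1, 0, 1]
        = RelBM.compW m (RelBM.wordOf ps) ∘ RelBM.compW m [0, 0, 1] := h
      _ = _ := rfl
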